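/- arXiv:1902.11260 — 2 statements merged into one kernel-verified Lean document; each statement's English description precedes it below -/
import Mathlib

section
/- For an undirected simple graph G on [n], the separation gaussoid ⟨G⟩ = {(ij|K) : K separates i and j in G} is a gaussoid satisfying the ascension axiom (ij|L) ⟹ (ij|kL); moreover G ↦ ⟨G⟩ is a bijection between graphs on [n] and ascending gaussoids, with inverse recovering the edge set as E = {ij : (ij|[n]\{i,j}) ∉ ⟨G⟩}. -/
abbrev Sq (n : ℕ) := Finset (Fin n) × Finset (Fin n)

/-- `G` is an `n`-gaussoid (set version). -/
def IsGaussoid (n : ℕ) (G : Set (Sq n)) : Prop :=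
  (∀ x ∈ G, x.1.card = 2 ∧ Disjoint x.1 x.2) ∧
  ∀ i j k : Fin n, ∀ L : Finset (Fin n),
    i ≠ j → i ≠ k → j ≠ k → i ∉ L → j ∉ L → k ∉ L →
    ((({i,j}, L) ∈ G ∧ ({i,k}, insert j L) ∈ G →
        ({i,k}, L) ∈ G ∧ ({i,j}, insert k L) ∈ G) ∧
     (({i,j}, insert k L) ∈ G ∧ ({i,k}, insert j L) ∈ G →
        ({i,j}, L) ∈ G ∧ ({i,k}, L) ∈ G) ∧
     (({i,j}, L) ∈ G ∧ ({i,k}, L) ∈ G →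
        ({i,j}, insert k L) ∈ G ∧ ({i,k}, insert j L) ∈ G) ∧
     (({i,j}, L) ∈ G ∧ ({i,j}, insert k L) ∈ G →
        ({i,k}, L) ∈ G ∨ ({j,k}, L) ∈ G))

/-- The ascension axiom: `(ij|L) ⟹ (ij|kL)`. -/
def Ascending (n : ℕ) (G : Set (Sq n)) : Prop :=
  ∀ i j k : Fin n, ∀ L : Finset (Fin n),
    i ≠ j → k ≠ i → k ≠ j → k ∉ L →
    ({i,j}, L) ∈ G → ({i,j}, insert k L) ∈ G

/-- `K` separates `i` and `j` in the graph `G`: every path from `i` to `j`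
meets `K`. -/
def Separates {n : ℕ} (G : SimpleGraph (Fin n)) (i j : Fin n)
    (K : Finset (Fin n)) : Prop :=
  ∀ w : G.Walk i j, ∃ v ∈ w.support, v ∈ K

/-- The separation gaussoid `⟨G⟩` of an undirected simple graph `G` on `[n]`. -/
def sepGaussoid {n : ℕ} (G : SimpleGraph (Fin n)) : Set (Sq n) :=
  {x | ∃ i j : Fin n, i ≠ j ∧ x.1 = {i,j} ∧ Disjoint x.1 x.2 ∧
        Separates G i j x.2}

namespace StmtAux
variable {n : ℕ} {G : SimpleGraph (Fin n)} {A : Set (Sq n)}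

lemma pair_eq_cases {α : Type*} [DecidableEq α] {i j a b : α} (hij : i ≠ j)
    (h : ({i,j} : Finset α) = {a,b}) : (i = a ∧ j = b) ∨ (i = b ∧ j = a) := by
  have hi : i ∈ ({a,b} : Finset α) := h ▸ (by simp)
  have hj : j ∈ ({a,b} : Finset α) := h ▸ (by simp)
  simp only [Finset.mem_insert, Finset.mem_singleton] at hi hj
  rcases hi with hi | hi <;> rcases hj with hj | hj
  · exact absurd (hi.trans hj.symm) hij
  · exact Or.inl ⟨hi, hj⟩
  · exact Or.inr ⟨hi, hj⟩
  · exact absurd (hi.trans hj.symm) hij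

lemma sep_symm {i j : Fin n} {K : Finset (Fin n)} (h : Separates G i j K) :
    Separates G j i K := by
  intro w
  obtain ⟨v, hv, hvK⟩ := h w.reverse
  exact ⟨v, by simpa using hv, hvK⟩

lemma sep_mono {i j : Fin n} {K K' : Finset (Fin n)} (hKK : K ⊆ K')
    (h : Separates G i j K) : Separates G i j K' := by
  intro w
  obtain ⟨v, hv, hvK⟩ := h w
  exact ⟨v, hv, hKK hvK⟩

lemma disjoint_pair {i j : Fin n} {L : Finset (Fin n)} :
    Disjoint ({i,j} : Finset (Fin n)) L ↔ i ∉ L ∧ j ∉ L := by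
  simp [Finset.disjoint_insert_left, Finset.disjoint_singleton_left]

lemma mem_sep_iff {i j : Fin n} {L : Finset (Fin n)} (hij : i ≠ j) :
    (({i,j}, L) : Sq n) ∈ sepGaussoid G ↔ i ∉ L ∧ j ∉ L ∧ Separates G i j L := by
  constructor
  · rintro ⟨a, b, hab, h1, h2, h3⟩
    have hd := disjoint_pair.mp h2
    rcases pair_eq_cases hij h1 with ⟨hi, hj⟩ | ⟨hi, hj⟩
    · subst hi; subst hj; exact ⟨hd.1, hd.2, h3⟩
    · subst hi; subst hj; exact ⟨hd.1, hd.2, sep_symm h3⟩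
  · rintro ⟨h1, h2, h3⟩
    exact ⟨i, j, hij, rfl, disjoint_pair.mpr ⟨h1, h2⟩, h3⟩

lemma not_mem_support_takeUntil {i k j : Fin n} (w : G.Walk i k)
    (hcount : w.support.count k = 1) (hj : j ∈ w.support) (hjk : j ≠ k) :
    k ∉ (w.takeUntil j hj).support := by
  have hspec := w.take_spec hj
  have hsupp : w.support
      = (w.takeUntil j hj).support ++ (w.dropUntil j hj).support.tail := by
    conv_lhs => rw [← hspec]
    exact SimpleGraph.Walk.support_append _ _
  have hkdrop : k ∈ (w.dropUntil j hj).support := SimpleGraph.Walk.end_mem_support _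
  have hcons : (w.dropUntil j hj).support = j :: (w.dropUntil j hj).support.tail :=
    SimpleGraph.Walk.support_eq_cons _
  have hktail : k ∈ (w.dropUntil j hj).support.tail := by
    rw [hcons] at hkdrop
    rcases List.mem_cons.mp hkdrop with h | h
    · exact absurd h.symm hjk
    · exact h
  have h1 : 1 ≤ (w.dropUntil j hj).support.tail.count k := List.one_le_count_iff.mpr hktail
  have h2 : (w.takeUntil j hj).support.count k
      + (w.dropUntil j hj).support.tail.count k = 1 := by
    rw [← List.count_append, ← hsupp, hcount]
  intro hk
  have := List.one_le_count_iff.mpr hk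
  omega

lemma sep_g1 {i j k : Fin n} {L : Finset (Fin n)}
    (h1 : Separates G i j L) (h2 : Separates G i k (insert j L)) :
    Separates G i k L := by
  intro w
  by_cases hj : j ∈ w.support
  · obtain ⟨v, hv, hvL⟩ := h1 (w.takeUntil j hj)
    exact ⟨v, SimpleGraph.Walk.support_takeUntil_subset _ hj hv, hvL⟩
  · obtain ⟨v, hv, hvL⟩ := h2 w
    rcases Finset.mem_insert.mp hvL with h | h
    · exact absurd (h ▸ hv) hj
    · exact ⟨v, hv, h⟩

lemma sep_g2 {i j k : Fin n} {L : Finset (Fin n)} (hjk : j ≠ k)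
    (h1 : Separates G i j (insert k L)) (h2 : Separates G i k (insert j L)) :
    Separates G i j L := by
  intro w
  by_cases hk : k ∈ w.support
  · set w1 := w.takeUntil k hk with hw1
    by_cases hj : j ∈ w1.support
    · set w2 := w1.takeUntil j hj with hw2
      have hknot : k ∉ w2.support :=
        not_mem_support_takeUntil w1
          (SimpleGraph.Walk.count_support_takeUntil_eq_one w hk) hj hjk
      obtain ⟨v, hv, hvL⟩ := h1 w2
      rcases Finset.mem_insert.mp hvL with h | h
      · exact absurd (h ▸ hv) hknot
      · exact ⟨v, SimpleGraph.Walk.support_takeUntil_subset _ hk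
          (SimpleGraph.Walk.support_takeUntil_subset _ hj hv), h⟩
    · obtain ⟨v, hv, hvL⟩ := h2 w1
      rcases Finset.mem_insert.mp hvL with h | h
      · exact absurd (h ▸ hv) hj
      · exact ⟨v, SimpleGraph.Walk.support_takeUntil_subset _ hk hv, h⟩
  · obtain ⟨v, hv, hvL⟩ := h1 w
    rcases Finset.mem_insert.mp hvL with h | h
    · exact absurd (h ▸ hv) hk
    · exact ⟨v, hv, h⟩

lemma sep_g4 {i j : Fin n} (k : Fin n) {L : Finset (Fin n)}
    (h1 : Separates G i j L) :
    Separates G i k L ∨ Separates G j k L := by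
  by_contra hc
  push_neg at hc
  obtain ⟨hik, hjk⟩ := hc
  simp only [Separates, not_forall] at hik hjk
  obtain ⟨w1, hw1⟩ := hik
  obtain ⟨w2, hw2⟩ := hjk
  push_neg at hw1 hw2
  obtain ⟨v, hv, hvL⟩ := h1 (w1.append w2.reverse)
  rw [SimpleGraph.Walk.mem_support_append_iff] at hv
  rcases hv with h | h
  · exact hw1 v h hvL
  · exact hw2 v (by simpa using h) hvL

lemma adj_of_support_subset {i j : Fin n} (w : G.Walk i j) (hij : i ≠ j)
    (hs : ∀ v ∈ w.support, v = i ∨ v = j) : G.Adj i j := by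
  cases w with
  | nil => exact absurd rfl hij
  | cons h q =>
    rename_i k
    rcases hs k (by simp) with h' | h'
    · exact absurd h' h.ne'
    · exact h' ▸ h

/-- adjacency is equivalent to non-separation by the full complement. -/
lemma adj_char {i j : Fin n} (hij : i ≠ j) :
    G.Adj i j ↔ (({i,j}, Finset.univ \ {i,j}) : Sq n) ∉ sepGaussoid G := by
  rw [mem_sep_iff hij]
  have hi : i ∉ Finset.univ \ ({i,j} : Finset (Fin n)) := by simp
  have hj : j ∉ Finset.univ \ ({i,j} : Finset (Fin n)) := by simp
  constructor
  · intro hadj hmem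
    obtain ⟨_, _, hsep⟩ := hmem
    obtain ⟨v, hv, hvL⟩ := hsep (SimpleGraph.Walk.cons hadj SimpleGraph.Walk.nil)
    simp only [SimpleGraph.Walk.support_cons, SimpleGraph.Walk.support_nil,
      List.mem_cons, List.mem_singleton, List.not_mem_nil, or_false] at hv
    simp only [Finset.mem_sdiff, Finset.mem_univ, true_and, Finset.mem_insert,
      Finset.mem_singleton] at hvL
    rcases hv with rfl | rfl
    · exact hvL (Or.inl rfl)
    · exact hvL (Or.inr rfl)
  · intro hn
    by_contra hadj
    refine hn ⟨hi, hj, ?_⟩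
    intro w
    by_contra hc
    push_neg at hc
    refine hadj (adj_of_support_subset w hij ?_)
    intro v hv
    have := hc v hv
    simp only [Finset.mem_sdiff, Finset.mem_univ, true_and, Finset.mem_insert,
      Finset.mem_singleton] at this
    tauto

lemma sep_isGaussoid : IsGaussoid n (sepGaussoid G) := by
  constructor
  · rintro x ⟨i, j, hij, h1, h2, _⟩
    refine ⟨?_, h2⟩
    rw [h1]
    rw [Finset.card_insert_of_notMem (by simpa using hij), Finset.card_singleton]
  · intro i j k L hij hik hjk hiL hjL hkL
    have hikL : i ∉ insert k L := by simp [hik, hiL]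
    have hjkL : j ∉ insert k L := by simp [hjk, hjL]
    have hijL : i ∉ insert j L := by simp [hij, hiL]
    have hkjL : k ∉ insert j L := by simp [Ne.symm hjk, hkL]
    refine ⟨?_, ?_, ?_, ?_⟩
    · rintro ⟨h1, h2⟩
      rw [mem_sep_iff hij] at h1
      rw [mem_sep_iff hik] at h2
      exact ⟨(mem_sep_iff hik).mpr ⟨hiL, hkL, sep_g1 h1.2.2 h2.2.2⟩,
        (mem_sep_iff hij).mpr ⟨hikL, hjkL,
          sep_mono (Finset.subset_insert _ _) h1.2.2⟩⟩
    · rintro ⟨h1, h2⟩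
      rw [mem_sep_iff hij] at h1
      rw [mem_sep_iff hik] at h2
      exact ⟨(mem_sep_iff hij).mpr ⟨hiL, hjL, sep_g2 hjk h1.2.2 h2.2.2⟩,
        (mem_sep_iff hik).mpr ⟨hiL, hkL, sep_g2 (Ne.symm hjk) h2.2.2 h1.2.2⟩⟩
    · rintro ⟨h1, h2⟩
      rw [mem_sep_iff hij] at h1
      rw [mem_sep_iff hik] at h2
      exact ⟨(mem_sep_iff hij).mpr ⟨hikL, hjkL,
          sep_mono (Finset.subset_insert _ _) h1.2.2⟩,
        (mem_sep_iff hik).mpr ⟨hijL, hkjL,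
          sep_mono (Finset.subset_insert _ _) h2.2.2⟩⟩
    · rintro ⟨h1, _⟩
      rw [mem_sep_iff hij] at h1
      rcases sep_g4 k h1.2.2 with h | h
      · exact Or.inl ((mem_sep_iff hik).mpr ⟨hiL, hkL, h⟩)
      · exact Or.inr ((mem_sep_iff hjk).mpr ⟨hjL, hkL, h⟩)

lemma sep_ascending : Ascending n (sepGaussoid G) := by
  intro i j k L hij hki hkj hkL h
  rw [mem_sep_iff hij] at h ⊢
  exact ⟨by simp [Ne.symm hki, h.1], by simp [Ne.symm hkj, h.2.1],
    sep_mono (Finset.subset_insert _ _) h.2.2⟩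

lemma ascend_full (hasc : Ascending n A) :
    ∀ (c : ℕ) (i j : Fin n) (L : Finset (Fin n)), i ≠ j → i ∉ L → j ∉ L →
      ((Finset.univ \ {i,j}) \ L).card = c → ({i,j}, L) ∈ A →
      ({i,j}, Finset.univ \ ({i,j} : Finset (Fin n))) ∈ A := by
  intro c
  induction c with
  | zero =>
    intro i j L hij hiL hjL hc hmem
    have hsub : L ⊆ Finset.univ \ {i,j} := by
      intro v hv
      simp only [Finset.mem_sdiff, Finset.mem_univ, true_and, Finset.mem_insert,
        Finset.mem_singleton]
      rintro (rfl | rfl) <;> [exact hiL hv; exact hjL hv]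
    have heq : Finset.univ \ ({i,j} : Finset (Fin n)) = L :=
      Finset.Subset.antisymm
        (Finset.sdiff_eq_empty_iff_subset.mp (Finset.card_eq_zero.mp hc)) hsub
    rwa [heq]
  | succ c ih =>
    intro i j L hij hiL hjL hc hmem
    have hne : ((Finset.univ \ {i,j}) \ L).Nonempty := by
      rw [← Finset.card_pos, hc]; omega
    obtain ⟨k, hkmem⟩ := hne
    have hkmem' := hkmem
    simp only [Finset.mem_sdiff, Finset.mem_univ, true_and, Finset.mem_insert,
      Finset.mem_singleton] at hkmem'
    obtain ⟨hkij, hkL⟩ := hkmem'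
    push_neg at hkij
    have hmem' : ({i,j}, insert k L) ∈ A := hasc i j k L hij hkij.1 hkij.2 hkL hmem
    refine ih i j (insert k L) hij (by simp [Ne.symm hkij.1, hiL])
      (by simp [Ne.symm hkij.2, hjL]) ?_ hmem'
    have heq : (Finset.univ \ {i,j}) \ insert k L
        = ((Finset.univ \ {i,j}) \ L).erase k := by
      ext v
      simp only [Finset.mem_sdiff, Finset.mem_insert, Finset.mem_erase]
      tauto
    rw [heq, Finset.card_erase_of_mem hkmem, hc]
    simp

lemma mem_to_sep (hA : IsGaussoid n A) (hasc : Ascending n A)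
    (hGA : ∀ i j : Fin n, i ≠ j →
      (G.Adj i j ↔ ({i,j}, Finset.univ \ ({i,j} : Finset (Fin n))) ∉ A)) :
    ∀ (m : ℕ) (i j : Fin n) (L : Finset (Fin n)) (w : G.Walk i j),
      w.length = m → i ≠ j → ({i,j}, L) ∈ A →
      (∀ v ∈ w.support, v ∉ L) → False := by
  intro m
  induction m with
  | zero =>
    intro i j L w hlen hij _ _
    cases w with
    | nil => exact hij rfl
    | cons h q => simp at hlen
  | succ m ih =>
    intro i j L w hlen hij hmem havoid
    obtain ⟨hiL, hjL⟩ : i ∉ L ∧ j ∉ L := by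
      have hd := (hA.1 _ hmem).2
      simp only [Finset.disjoint_insert_left, Finset.disjoint_singleton_left] at hd
      exact hd
    cases w with
    | nil => exact hij rfl
    | cons h q =>
      rename_i k
      have hki : k ≠ i := h.ne'
      have hkL : k ∉ L := havoid k (by simp)
      by_cases hkj : k = j
      · have h' : G.Adj i j := hkj ▸ h
        have hfull := ascend_full hasc _ i j L hij hiL hjL rfl hmem
        exact (hGA i j hij).mp h' hfull
      · have hmem2 : ({i,j}, insert k L) ∈ A :=
          hasc i j k L hij hki (fun h => hkj h) hkL hmem
        have hg4 := ((hA.2 i j k L hij (fun h => hki h.symm) (fun h => hkj h.symm)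
          hiL hjL hkL).2.2.2) ⟨hmem, hmem2⟩
        rcases hg4 with hik | hjk
        · have hfull := ascend_full hasc _ i k L (fun h => hki h.symm) hiL hkL rfl hik
          exact (hGA i k (fun h => hki h.symm)).mp h hfull
        · have hmem3 : ({k,j}, L) ∈ A := by rwa [Finset.pair_comm]
          refine ih k j L q (by simpa using hlen) hkj hmem3 ?_
          intro v hv
          exact havoid v (by simp [hv])

lemma sep_to_mem (hA : IsGaussoid n A)
    (hGA : ∀ i j : Fin n, i ≠ j →
      (G.Adj i j ↔ ({i,j}, Finset.univ \ ({i,j} : Finset (Fin n))) ∉ A)) :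
    ∀ (m : ℕ) (i j : Fin n) (L : Finset (Fin n)), i ≠ j → i ∉ L → j ∉ L →
      ((Finset.univ \ {i,j}) \ L).card = m → Separates G i j L →
      ({i,j}, L) ∈ A := by
  intro m
  induction m with
  | zero =>
    intro i j L hij hiL hjL hc hsep
    have hsub : L ⊆ Finset.univ \ {i,j} := by
      intro v hv
      simp only [Finset.mem_sdiff, Finset.mem_univ, true_and, Finset.mem_insert,
        Finset.mem_singleton]
      rintro (rfl | rfl) <;> [exact hiL hv; exact hjL hv]
    have hLfull : L = Finset.univ \ ({i,j} : Finset (Fin n)) :=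
      Finset.Subset.antisymm hsub
        (Finset.sdiff_eq_empty_iff_subset.mp (Finset.card_eq_zero.mp hc))
    subst hLfull
    have hnadj : ¬ G.Adj i j := by
      intro hadj
      obtain ⟨v, hv, hvL⟩ := hsep (SimpleGraph.Walk.cons hadj SimpleGraph.Walk.nil)
      simp only [SimpleGraph.Walk.support_cons, SimpleGraph.Walk.support_nil,
        List.mem_cons, List.mem_singleton, List.not_mem_nil, or_false] at hv
      simp only [Finset.mem_sdiff, Finset.mem_univ, true_and, Finset.mem_insert,
        Finset.mem_singleton] at hvL
      rcases hv with rfl | rfl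
      · exact hvL (Or.inl rfl)
      · exact hvL (Or.inr rfl)
    by_contra hmem
    exact hnadj ((hGA i j hij).mpr hmem)
  | succ m ih =>
    intro i j L hij hiL hjL hc hsep
    have hne : ((Finset.univ \ {i,j}) \ L).Nonempty := by
      rw [← Finset.card_pos, hc]; omega
    obtain ⟨k, hkmem⟩ := hne
    have hkmem' := hkmem
    simp only [Finset.mem_sdiff, Finset.mem_univ, true_and, Finset.mem_insert,
      Finset.mem_singleton] at hkmem'
    obtain ⟨hkij, hkL⟩ := hkmem'
    push_neg at hkij
    obtain ⟨hki, hkj⟩ := hkij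
    have hcard : ∀ S : Finset (Fin n),
        (∀ v, v ∈ S ↔ (v ≠ i ∧ v ≠ j ∧ v ≠ k ∧ v ∉ L)) → S.card = m := by
      intro S hS
      have heq : S = ((Finset.univ \ {i,j}) \ L).erase k := by
        ext v
        rw [hS v]
        simp only [Finset.mem_erase, Finset.mem_sdiff, Finset.mem_univ, true_and,
          Finset.mem_insert, Finset.mem_singleton]
        tauto
      rw [heq, Finset.card_erase_of_mem hkmem, hc]
      simp
    rcases sep_g4 k hsep with hik | hjk
    · -- L separates i and k
      have m1 : ({i,k}, insert j L) ∈ A := by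
        refine ih i k (insert j L) (fun h => hki h.symm)
          (by simp [hij, hiL]) (by simp [hkj, hkL]) ?_
          (sep_mono (Finset.subset_insert _ _) hik)
        refine hcard _ (fun v => ?_)
        simp only [Finset.mem_sdiff, Finset.mem_univ, true_and, Finset.mem_insert,
          Finset.mem_singleton]
        tauto
      have m2 : ({i,j}, insert k L) ∈ A := by
        refine ih i j (insert k L) hij (by simp [Ne.symm hki, hiL])
          (by simp [Ne.symm hkj, hjL]) ?_
          (sep_mono (Finset.subset_insert _ _) hsep)
        refine hcard _ (fun v => ?_)
        simp only [Finset.mem_sdiff, Finset.mem_univ, true_and, Finset.mem_insert,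
          Finset.mem_singleton]
        tauto
      exact ((hA.2 i j k L hij (fun h => hki h.symm) (fun h => hkj h.symm)
        hiL hjL hkL).2.1 ⟨m2, m1⟩).1
    · -- L separates j and k
      have m1 : ({j,k}, insert i L) ∈ A := by
        refine ih j k (insert i L) (fun h => hkj h.symm)
          (by simp [Ne.symm hij, hjL]) (by simp [hki, hkL]) ?_
          (sep_mono (Finset.subset_insert _ _) hjk)
        refine hcard _ (fun v => ?_)
        simp only [Finset.mem_sdiff, Finset.mem_univ, true_and, Finset.mem_insert,
          Finset.mem_singleton]
        tauto
      have m2 : ({j,i}, insert k L) ∈ A := by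
        refine ih j i (insert k L) (Ne.symm hij) (by simp [Ne.symm hkj, hjL])
          (by simp [Ne.symm hki, hiL]) ?_
          (sep_mono (Finset.subset_insert _ _) (sep_symm hsep))
        refine hcard _ (fun v => ?_)
        simp only [Finset.mem_sdiff, Finset.mem_univ, true_and, Finset.mem_insert,
          Finset.mem_singleton]
        tauto
      have := ((hA.2 j i k L (Ne.symm hij) (fun h => hkj h.symm)
        (fun h => hki h.symm) hjL hiL hkL).2.1 ⟨m2, m1⟩).1
      rwa [Finset.pair_comm] at this

end StmtAux

/-- For every graph `G` on `[n]`, `⟨G⟩` is an ascending gaussoid; the map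
`G ↦ ⟨G⟩` is a bijection onto the ascending gaussoids, and the inverse
recovers the edges as `E = {ij : (ij|[n]\ij) ∉ ⟨G⟩}`. -/
theorem stmt_18 (n : ℕ) :
    (∀ G : SimpleGraph (Fin n),
      IsGaussoid n (sepGaussoid G) ∧ Ascending n (sepGaussoid G) ∧
      (∀ i j : Fin n, i ≠ j →
        (G.Adj i j ↔ (({i,j}, Finset.univ \ {i,j}) : Sq n) ∉ sepGaussoid G))) ∧
    Function.Injective (sepGaussoid (n := n)) ∧
    (∀ A : Set (Sq n), IsGaussoid n A → Ascending n A →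
      ∃ G : SimpleGraph (Fin n), sepGaussoid G = A) := by
  refine ⟨fun G => ⟨StmtAux.sep_isGaussoid, StmtAux.sep_ascending,
    fun i j hij => StmtAux.adj_char hij⟩, ?_, ?_⟩
  · -- injectivity
    intro G H h
    apply SimpleGraph.ext
    funext i j
    by_cases hij : i = j
    · subst hij
      simp
    · have h1 := (StmtAux.adj_char (G := G) hij).trans
        (Iff.symm (h ▸ StmtAux.adj_char (G := H) hij))
      exact propext h1
  · -- surjectivity onto ascending gaussoids
    intro A hA hasc
    have hsymm : Symmetric (fun i j : Fin n =>
        i ≠ j ∧ ({i,j}, Finset.univ \ ({i,j} : Finset (Fin n))) ∉ A) := by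
      intro i j h
      refine ⟨Ne.symm h.1, ?_⟩
      rw [Finset.pair_comm]
      exact h.2
    have hirr : Irreflexive (fun i j : Fin n =>
        i ≠ j ∧ ({i,j}, Finset.univ \ ({i,j} : Finset (Fin n))) ∉ A) :=
      fun i h => h.1 rfl
    set G : SimpleGraph (Fin n) := ⟨_, ⟨fun a b => @hsymm a b⟩, ⟨hirr⟩⟩ with hGdef
    refine ⟨G, ?_⟩
    have hGA : ∀ i j : Fin n, i ≠ j →
        (G.Adj i j ↔ ({i,j}, Finset.univ \ ({i,j} : Finset (Fin n))) ∉ A) := by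
      intro i j hij
      exact ⟨fun h => h.2, fun h => ⟨hij, h⟩⟩
    ext x
    obtain ⟨x1, x2⟩ := x
    constructor
    · rintro ⟨i, j, hij, h1, h2, h3⟩
      simp only at h1 h2 h3
      subst h1
      have hd := StmtAux.disjoint_pair.mp h2
      exact StmtAux.sep_to_mem hA hGA _ i j x2 hij hd.1 hd.2 rfl h3
    · intro hx
      obtain ⟨hcard, hdisj⟩ := hA.1 _ hx
      simp only at hcard hdisj
      obtain ⟨i, j, hij, h1⟩ := Finset.card_eq_two.mp hcard
      subst h1
      have hd := StmtAux.disjoint_pair.mp hdisj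
      refine ⟨i, j, hij, rfl, StmtAux.disjoint_pair.mpr hd, ?_⟩
      intro w
      by_contra hc
      push_neg at hc
      exact StmtAux.mem_to_sep hA hasc hGA w.length i j x2 w rfl hij hx hc
end

section
/- Bi-monotone gaussoids (gaussoids satisfying both the ascension axiom (ij|L) ⟹ (ij|kL) and the descension axiom (ij|kL) ⟹ (ij|L)) on ground set [n] are in bijection with the partitions of [n]: a bi-monotone gaussoid is exactly the set of symbols (ij|K) with i and j in different blocks of a partition, for a unique partition of [n]. -/
/-- The descension axiom: `(ij|kL) ⟹ (ij|L)`. -/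
def Descending (n : ℕ) (G : Set (Sq n)) : Prop :=
  ∀ i j k : Fin n, ∀ L : Finset (Fin n),
    i ≠ j → k ≠ i → k ≠ j → k ∉ L →
    ({i,j}, insert k L) ∈ G → ({i,j}, L) ∈ G

/-- The set of squares associated to a partition (equivalence relation) `s` of
`[n]`: all symbols `(ij|K)` such that `i` and `j` lie in different blocks. -/
def partGaussoid {n : ℕ} (s : Setoid (Fin n)) : Set (Sq n) :=
  {x | ∃ i j : Fin n, i ≠ j ∧ x.1 = {i,j} ∧ Disjoint x.1 x.2 ∧ ¬ s.r i j}

lemma mem_partGaussoid {n} (s : Setoid (Fin n)) {i j : Fin n} {L : Finset (Fin n)}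
    (hij : i ≠ j) :
    (({i,j}, L) : Sq n) ∈ partGaussoid s ↔ (i ∉ L ∧ j ∉ L ∧ ¬ s.r i j) := by
  constructor
  · rintro ⟨a, b, hab, h1, h2, h3⟩
    have hi : i ∈ ({a,b} : Finset (Fin n)) := by rw [← h1]; simp
    have hj : j ∈ ({a,b} : Finset (Fin n)) := by rw [← h1]; simp
    simp only [Finset.mem_insert, Finset.mem_singleton] at hi hj
    simp only [Finset.disjoint_insert_left, Finset.disjoint_singleton_left] at h2
    refine ⟨h2.1, h2.2, ?_⟩
    rcases hi with rfl | rfl <;> rcases hj with rfl | rfl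
    · exact absurd rfl hij
    · exact h3
    · exact fun h => h3 (s.symm h)
    · exact absurd rfl hij
  · rintro ⟨h1, h2, h3⟩
    exact ⟨i, j, hij, rfl, by simp [h1, h2], h3⟩

lemma extend_lemma {n} {A : Set (Sq n)} (hAsc : Ascending n A) (hDesc : Descending n A)
    {i j : Fin n} (hij : i ≠ j) :
    ∀ L : Finset (Fin n), i ∉ L → j ∉ L →
      ((({i,j}, L) : Sq n) ∈ A ↔ (({i,j}, (∅ : Finset (Fin n))) : Sq n) ∈ A) := by
  intro L
  induction L using Finset.induction_on with
  | empty => intro _ _; rfl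
  | @insert k L' hk ih =>
    intro hi hj
    simp only [Finset.mem_insert, not_or] at hi hj
    have hki : k ≠ i := fun h => hi.1 h.symm
    have hkj : k ≠ j := fun h => hj.1 h.symm
    rw [← ih hi.2 hj.2]
    exact ⟨hDesc i j k L' hij hki hkj hk, hAsc i j k L' hij hki hkj hk⟩

/-- Bi-monotone gaussoids are in bijection with the partitions of `[n]`:
each partition yields a bi-monotone gaussoid, and every bi-monotone gaussoid
comes from a unique partition. -/
theorem stmt_19 (n : ℕ) :
    (∀ s : Setoid (Fin n),
      IsGaussoid n (partGaussoid s) ∧ Ascending n (partGaussoid s) ∧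
        Descending n (partGaussoid s)) ∧
    (∀ A : Set (Sq n), IsGaussoid n A → Ascending n A → Descending n A →
      ∃! s : Setoid (Fin n), A = partGaussoid s) := by
  constructor
  · intro s
    refine ⟨⟨?_, ?_⟩, ?_, ?_⟩
    · rintro x ⟨i, j, hij, h1, h2, h3⟩
      exact ⟨by rw [h1]; exact Finset.card_pair hij, h2⟩
    · intro i j k L hij hik hjk hiL hjL hkL
      have htr : s.r i k → s.r j k → s.r i j := fun h1 h2 => s.trans h1 (s.symm h2)
      have hji := hij.symm; have hki := hik.symm; have hkj := hjk.symm
      simp only [mem_partGaussoid s hij, mem_partGaussoid s hik,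
        mem_partGaussoid s hjk, Finset.mem_insert, not_or]
      tauto
    · intro i j k L hij hki hkj hkL hm
      rw [mem_partGaussoid s hij] at hm ⊢
      simp only [Finset.mem_insert, not_or]
      exact ⟨⟨fun h => hki h.symm, hm.1⟩, ⟨fun h => hkj h.symm, hm.2.1⟩, hm.2.2⟩
    · intro i j k L hij hki hkj hkL hm
      rw [mem_partGaussoid s hij] at hm ⊢
      simp only [Finset.mem_insert, not_or] at hm
      exact ⟨hm.1.2, hm.2.1.2, hm.2.2⟩
  · intro A hG hAsc hDesc
    have eqv : Equivalence (fun i j : Fin n => i = j ∨ (({i,j}, ∅) : Sq n) ∉ A) := by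
      constructor
      · intro x; exact Or.inl rfl
      · rintro x y (rfl | h)
        · exact Or.inl rfl
        · exact Or.inr (by rwa [Finset.pair_comm])
      · rintro x y z (rfl | h1) h2
        · exact h2
        · rcases h2 with rfl | h2
          · exact Or.inr h1
          ·
            -- derive from memberships); handle x = z first
            by_cases hxz : x = z
            · exact Or.inl hxz
            right
            intro hxzA
            by_cases hxy : x = y
            · exact h2 (by rwa [← hxy])
            by_cases hyz : y = z
            · exact h1 (by rwa [hyz])
            have hstep := hAsc x z y ∅ hxz (fun h => hxy h.symm) (fun h => hyz h)
              (Finset.notMem_empty y) hxzA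
            have := (hG.2 x z y ∅ hxz hxy (fun h => hyz h.symm) (Finset.notMem_empty x)
              (Finset.notMem_empty z) (Finset.notMem_empty y)).2.2.2 ⟨hxzA, hstep⟩
            rcases this with h | h
            · exact h1 h
            · exact h2 (by rwa [Finset.pair_comm])
    set s₀ : Setoid (Fin n) := ⟨fun i j => i = j ∨ (({i,j}, ∅) : Sq n) ∉ A, eqv⟩ with hs₀
    have hr : ∀ i j : Fin n, s₀.r i j ↔ (i = j ∨ (({i,j}, ∅) : Sq n) ∉ A) := fun _ _ => Iff.rfl
    have hAeq : A = partGaussoid s₀ := by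
      ext x
      obtain ⟨K, L⟩ := x
      constructor
      · intro hx
        obtain ⟨hcard, hdisj⟩ := hG.1 _ hx
        obtain ⟨i, j, hij, rfl⟩ := Finset.card_eq_two.mp hcard
        simp only [Finset.disjoint_insert_left, Finset.disjoint_singleton_left] at hdisj
        have h0 : (({i,j}, ∅) : Sq n) ∈ A :=
          (extend_lemma hAsc hDesc hij L hdisj.1 hdisj.2).mp hx
        refine (mem_partGaussoid s₀ hij).mpr ⟨hdisj.1, hdisj.2, ?_⟩
        rintro (h | h)
        · exact hij h
        · exact h h0
      · rintro ⟨i, j, hij, h1, h2, h3⟩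
        simp only at h1 h2
        subst h1
        simp only [Finset.disjoint_insert_left, Finset.disjoint_singleton_left] at h2
        rw [hr] at h3
        push_neg at h3
        exact (extend_lemma hAsc hDesc hij L h2.1 h2.2).mpr h3.2
    refine ⟨s₀, hAeq, ?_⟩
    intro t ht
    apply Setoid.ext
    intro a b
    rw [hr]
    by_cases hab : a = b
    · subst hab; exact iff_of_true (t.refl a) (Or.inl rfl)
    have hmem : (({a,b}, ∅) : Sq n) ∈ A ↔ ¬ t.r a b := by
      rw [ht, mem_partGaussoid t hab]
      simp
    constructor
    · intro h
      right
      intro hm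
      exact (hmem.mp hm) h
    · rintro (rfl | h)
      · exact t.refl a
      · by_contra hn
        exact h (hmem.mpr hn)
end
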